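/- Let α ∈ (0,1] and λ ∈ ℝ. The identity E_α(λ·(t+s)^α) = E_α(λ·t^α)·E_α(λ·s^α) holds for all t, s ∈ [0,∞) if and only if α = 1 or λ = 0. -/

import Mathlib

noncomputable def mittagLeffler (α z : ℝ) : ℝ := ∑' n : ℕ, z ^ n / Real.Gamma (α * n + 1)

noncomputable def mittagLeffler2 (α β z : ℝ) : ℝ := ∑' n : ℕ, z ^ n / Real.Gamma (α * n + β)

open Real Filter Topology

open Real Filter Topology

lemma gamma_floor_le {x : ℝ} (hx : 0 ≤ x) :
    (Nat.floor x).factorial / 2 ≤ Real.Gamma (x + 1) := by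
  set m := Nat.floor x with hm
  have hmx : (m : ℝ) ≤ x := Nat.floor_le hx
  have hxm : x < m + 1 := Nat.lt_floor_add_one x
  have h1 : Real.Gamma ((m : ℝ) + 2) ≤ Real.Gamma (x + 2) := by
    refine Real.Gamma_strictMonoOn_Ici.monotoneOn ?_ ?_ (by linarith)
    · simp [Set.mem_Ici]
    · simp [Set.mem_Ici]; linarith
  have h2 : Real.Gamma ((m : ℝ) + 2) = (m + 1).factorial := by
    have := Real.Gamma_nat_eq_factorial (m + 1)
    push_cast at this ⊢
    rw [← this]; ring_nf
  have h3 : Real.Gamma (x + 2) = (x + 1) * Real.Gamma (x + 1) := by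
    have : x + 2 = (x + 1) + 1 := by ring
    rw [this, Real.Gamma_add_one (by linarith)]
  have h4 : ((m + 1).factorial : ℝ) ≤ (x + 1) * Real.Gamma (x + 1) := by
    rw [← h3, ← h2]; exact h1
  have hfac : ((m + 1).factorial : ℝ) = (m + 1) * m.factorial := by push_cast [Nat.factorial_succ]; ring
  have hx1 : (0:ℝ) < x + 1 := by linarith
  have hΓ : 0 < Real.Gamma (x + 1) := Real.Gamma_pos_of_pos (by linarith)
  rw [div_le_iff₀ (by norm_num)]
  nlinarith [Nat.cast_nonneg (α := ℝ) m.factorial, Nat.cast_nonneg (α := ℝ) m]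

lemma ml_summable {α : ℝ} (hα : 0 < α) (z : ℝ) :
    Summable (fun n : ℕ => z ^ n / Real.Gamma (α * n + 1)) := by
  set y : ℝ := max |z| 1 with hy
  have hy1 : (1:ℝ) ≤ y := le_max_right _ _
  have hy0 : (0:ℝ) < y := lt_of_lt_of_le one_pos hy1
  set k : ℕ := ⌈1/α⌉₊ with hk
  have hk1 : 1/α ≤ k := Nat.le_ceil _
  set w : ℝ := y ^ k with hw
  have hw1 : (1:ℝ) ≤ w := one_le_pow₀ hy1
  have hw0 : (0:ℝ) < w := lt_of_lt_of_le one_pos hw1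
  set r : ℝ := (1/2 : ℝ) ^ α with hr
  have hr0 : 0 < r := Real.rpow_pos_of_pos (by norm_num) _
  have hr1 : r < 1 := Real.rpow_lt_one (by norm_num) (by norm_num) hα
  -- eventual smallness of (2w)^m / m!
  obtain ⟨M, hM⟩ : ∃ M : ℕ, ∀ m ≥ M, (2*w) ^ m / (m.factorial : ℝ) ≤ 1 := by
    have h := (Real.summable_pow_div_factorial (2*w)).tendsto_atTop_zero
    have := (h.eventually (eventually_le_nhds (show (0:ℝ) < 1 by norm_num)))
    exact eventually_atTop.mp this
  -- main eventual bound
  have key : ∀ᶠ n : ℕ in atTop, ‖z ^ n / Real.Gamma (α * n + 1)‖ ≤ (4*w) * r ^ n := by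
    filter_upwards [eventually_ge_atTop ⌈(M:ℝ)/α⌉₊] with n hn
    set m : ℕ := ⌊α * n⌋₊ with hm
    have hαn : (0:ℝ) ≤ α * n := by positivity
    have hmM : M ≤ m := by
      rw [hm]
      apply Nat.le_floor
      have h1 : ((M:ℝ)/α) ≤ (⌈(M:ℝ)/α⌉₊ : ℝ) := Nat.le_ceil _
      have h2 : ((⌈(M:ℝ)/α⌉₊ : ℕ) : ℝ) ≤ (n:ℝ) := Nat.cast_le.mpr hn
      calc (M:ℝ) = α * ((M:ℝ)/α) := by field_simp
        _ ≤ α * n := by apply mul_le_mul_of_nonneg_left (by linarith) hα.le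
    have hΓ : (m.factorial : ℝ) / 2 ≤ Real.Gamma (α * n + 1) := gamma_floor_le hαn
    have hΓ0 : (0:ℝ) < Real.Gamma (α * n + 1) := Real.Gamma_pos_of_pos (by positivity)
    have hfac0 : (0:ℝ) < (m.factorial : ℝ) := by positivity
    -- |z|^n ≤ w^(m+1)
    have hnk : (n : ℝ) ≤ (k * (m+1) : ℕ) := by
      push_cast
      have h1 : α * n < m + 1 := Nat.lt_floor_add_one _
      have h2 : (n:ℝ) = (α * n) * (1/α) := by field_simp
      rw [h2]
      calc (α * n) * (1/α) ≤ (m+1) * k := by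
            apply mul_le_mul h1.le hk1 (by positivity) (by positivity)
        _ = (k:ℝ) * (m+1) := by ring
    have hzn : |z| ^ n ≤ w ^ (m+1) := by
      calc |z| ^ n ≤ y ^ n := pow_le_pow_left₀ (abs_nonneg z) (le_max_left _ _) n
        _ ≤ y ^ (k * (m+1)) := pow_le_pow_right₀ hy1 (by exact_mod_cast hnk)
        _ = w ^ (m+1) := by rw [pow_mul]
    -- (w)^m / m! ≤ (1/2)^m
    have hsmall : w ^ m / (m.factorial:ℝ) ≤ (2:ℝ)⁻¹ ^ m := by
      have h := hM m hmM
      rw [div_le_one hfac0, mul_pow] at h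
      have h2 := mul_le_mul_of_nonneg_left h (by positivity : (0:ℝ) ≤ (2:ℝ)⁻¹ ^ m)
      rw [div_le_iff₀ hfac0]
      calc w ^ m = (2:ℝ)⁻¹ ^ m * (2 ^ m * w ^ m) := by
            rw [← mul_assoc, ← mul_pow]; norm_num
        _ ≤ _ := h2
    have hpow : ((2:ℝ)⁻¹) ^ m ≤ 2 * r ^ n := by
      have hm1 : α * n - 1 ≤ (m : ℝ) := by
        have := Nat.lt_floor_add_one (α * (n:ℝ))
        rw [← hm] at this
        linarith
      have e1 : ((2:ℝ)⁻¹) ^ m = (1/2 : ℝ) ^ (m : ℝ) := by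
        rw [Real.rpow_natCast]; norm_num
      have e2 : (1/2 : ℝ) ^ ((m : ℝ)) ≤ (1/2 : ℝ) ^ (α * n - 1) :=
        Real.rpow_le_rpow_of_exponent_ge (by norm_num) (by norm_num) hm1
      have e3 : (1/2 : ℝ) ^ (α * n - 1) = 2 * r ^ n := by
        rw [Real.rpow_sub (by norm_num), Real.rpow_one, hr,
          ← Real.rpow_natCast ((1/2:ℝ) ^ α) n, ← Real.rpow_mul (by norm_num)]
        ring_nf
      rw [e1]
      rw [e3] at e2
      exact e2
    have hmain : ‖z ^ n / Real.Gamma (α * n + 1)‖ ≤ 2 * w * (w ^ m / (m.factorial:ℝ)) := by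
      rw [norm_div, Real.norm_eq_abs, Real.norm_eq_abs, abs_of_pos hΓ0, abs_pow]
      calc |z| ^ n / Real.Gamma (α * n + 1) ≤ w ^ (m+1) / ((m.factorial:ℝ)/2) := by
            apply div_le_div₀ (by positivity) hzn (by positivity) hΓ
        _ = 2 * w * (w ^ m / (m.factorial:ℝ)) := by
            rw [pow_succ]; field_simp
    calc ‖z ^ n / Real.Gamma (α * n + 1)‖ ≤ 2 * w * (w ^ m / (m.factorial:ℝ)) := hmain
      _ ≤ 2 * w * ((2:ℝ)⁻¹ ^ m) := by
          apply mul_le_mul_of_nonneg_left hsmall (by positivity)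
      _ ≤ 2 * w * (2 * r ^ n) := mul_le_mul_of_nonneg_left hpow (by positivity)
      _ = (4*w) * r ^ n := by ring
  apply summable_of_isBigO_nat (((summable_geometric_of_lt_one hr0.le hr1)).mul_left (4*w))
  apply Asymptotics.IsBigO.of_bound 1
  filter_upwards [key] with n hn
  calc ‖z ^ n / Real.Gamma (α * n + 1)‖ ≤ 4*w * r^n := hn
    _ ≤ 1 * ‖4*w * r^n‖ := by rw [one_mul, Real.norm_eq_abs]; exact le_abs_self _

lemma ml_zero {α : ℝ} : mittagLeffler α 0 = 1 := by
  unfold mittagLeffler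
  rw [tsum_eq_single 0]
  · norm_num [Real.Gamma_one]
  · intro n hn; rw [zero_pow hn, zero_div]

lemma ml_one (z : ℝ) : mittagLeffler 1 z = Real.exp z := by
  rw [Real.exp_eq_exp_ℝ, NormedSpace.exp_eq_tsum_div]
  unfold mittagLeffler
  congr 1; funext n
  rw [one_mul]
  norm_num [Real.Gamma_nat_eq_factorial]

lemma ml_tendsto {α : ℝ} (hα : 0 < α) (lam : ℝ) :
    Tendsto (fun u : ℝ => (mittagLeffler α (lam * u) - 1) / u) (𝓝[>] 0)
      (𝓝 (lam / Real.Gamma (α + 1))) := by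
  set L := lam / Real.Gamma (α + 1) with hL
  set M : ℝ := ∑' n : ℕ, |lam| ^ (n+2) / Real.Gamma (α * ((n+2 : ℕ) : ℝ) + 1) with hM
  have hΓpos : ∀ n : ℕ, 0 < Real.Gamma (α * n + 1) := fun n =>
    Real.Gamma_pos_of_pos (by positivity)
  have hΓ1 : (0:ℝ) < Real.Gamma (α + 1) := by
    have := hΓpos 1; simpa using this
  have hshift : ∀ z : ℝ, Summable (fun n : ℕ => z ^ (n+2) / Real.Gamma (α * ((n+2:ℕ):ℝ) + 1)) :=
    fun z => (summable_nat_add_iff 2).mpr (ml_summable hα z)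
  have hexp : ∀ u : ℝ, mittagLeffler α (lam * u) =
      1 + L * u + ∑' n : ℕ, (lam*u) ^ (n+2) / Real.Gamma (α * ((n+2:ℕ):ℝ) + 1) := by
    intro u
    unfold mittagLeffler
    rw [Summable.tsum_eq_zero_add (ml_summable hα (lam*u)),
      Summable.tsum_eq_zero_add ((summable_nat_add_iff 1).mpr (ml_summable hα (lam*u)))]
    have e0 : (lam*u) ^ (0:ℕ) / Real.Gamma (α * ((0:ℕ):ℝ) + 1) = 1 := by
      norm_num [Real.Gamma_one]
    have e1 : (lam*u) ^ (0+1:ℕ) / Real.Gamma (α * ((0+1:ℕ):ℝ) + 1) = L * u := by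
      rw [hL]; push_cast; field_simp
    rw [e0, e1]
    have e2 : ∀ n : ℕ, (lam*u) ^ (n+1+1) / Real.Gamma (α * ((n+1+1:ℕ):ℝ) + 1)
        = (lam*u) ^ (n+2) / Real.Gamma (α * ((n+2:ℕ):ℝ) + 1) := by
      intro n
      have h : α * ((n+1+1:ℕ):ℝ) + 1 = α * ((n+2:ℕ):ℝ) + 1 := by push_cast; ring
      rw [show n+1+1 = n+2 from rfl, h]
    rw [tsum_congr e2]; ring
  have hMnonneg : 0 ≤ M := tsum_nonneg (fun n => by positivity)
  have hbound : ∀ u : ℝ, 0 < u → u ≤ 1 →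
      |∑' n : ℕ, (lam*u) ^ (n+2) / Real.Gamma (α * ((n+2:ℕ):ℝ) + 1)| ≤ u^2 * M := by
    intro u hu hu1
    have habs : ∀ n : ℕ, |(lam*u) ^ (n+2) / Real.Gamma (α * ((n+2:ℕ):ℝ) + 1)|
        ≤ u^2 * (|lam| ^ (n+2) / Real.Gamma (α * ((n+2:ℕ):ℝ) + 1)) := by
      intro n
      have hg : 0 < Real.Gamma (α * ((n+2:ℕ):ℝ) + 1) := hΓpos (n+2)
      rw [abs_div, abs_of_pos hg, abs_pow, abs_mul, abs_of_pos hu, mul_pow]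
      have hpow : u ^ (n+2) ≤ u ^ 2 := pow_le_pow_of_le_one hu.le hu1 (by omega)
      calc |lam| ^ (n+2) * u ^ (n+2) / Real.Gamma (α * ((n+2:ℕ):ℝ) + 1)
          ≤ |lam| ^ (n+2) * u ^ 2 / Real.Gamma (α * ((n+2:ℕ):ℝ) + 1) := by
            gcongr
        _ = u^2 * (|lam| ^ (n+2) / Real.Gamma (α * ((n+2:ℕ):ℝ) + 1)) := by ring
    calc |∑' n : ℕ, (lam*u) ^ (n+2) / Real.Gamma (α * ((n+2:ℕ):ℝ) + 1)|
        ≤ ∑' n : ℕ, |(lam*u) ^ (n+2) / Real.Gamma (α * ((n+2:ℕ):ℝ) + 1)| := by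
          have := norm_tsum_le_tsum_norm (f := fun n : ℕ =>
            (lam*u) ^ (n+2) / Real.Gamma (α * ((n+2:ℕ):ℝ) + 1)) ((hshift (lam*u)).abs)
          simp only [Real.norm_eq_abs] at this
          exact this
      _ ≤ ∑' n : ℕ, u^2 * (|lam| ^ (n+2) / Real.Gamma (α * ((n+2:ℕ):ℝ) + 1)) :=
          Summable.tsum_le_tsum habs ((hshift (lam*u)).abs) ((hshift |lam|).mul_left _)
      _ = u^2 * M := by rw [tsum_mul_left]
  rw [← tendsto_sub_nhds_zero_iff]
  apply squeeze_zero_norm' (a := fun u => u * M)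
  · filter_upwards [Ioc_mem_nhdsGT_of_mem (by constructor <;> norm_num : (0:ℝ) ∈ Set.Ico (0:ℝ) 1)]
      with u hu
    obtain ⟨hu0, hu1⟩ := hu
    have hne : u ≠ 0 := ne_of_gt hu0
    have heq : (mittagLeffler α (lam * u) - 1) / u - L
        = (∑' n : ℕ, (lam*u) ^ (n+2) / Real.Gamma (α * ((n+2:ℕ):ℝ) + 1)) / u := by
      rw [hexp u]; field_simp; ring
    rw [Real.norm_eq_abs, heq, abs_div, abs_of_pos hu0, div_le_iff₀ hu0]
    calc |∑' n : ℕ, (lam*u) ^ (n+2) / Real.Gamma (α * ((n+2:ℕ):ℝ) + 1)| ≤ u^2 * M :=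
          hbound u hu0 hu1
      _ = u * M * u := by ring
  · have : Tendsto (fun u : ℝ => u * M) (𝓝 0) (𝓝 (0 * M)) :=
      (continuous_id.mul continuous_const).tendsto 0
    rw [zero_mul] at this
    exact this.mono_left nhdsWithin_le_nhds

theorem ml_semigroup_iff' (α : ℝ) (hα : 0 < α) (hα1 : α ≤ 1) (lam : ℝ) :
    (∀ t s : ℝ, 0 ≤ t → 0 ≤ s →
        mittagLeffler α (lam * (t + s) ^ α)
          = mittagLeffler α (lam * t ^ α) * mittagLeffler α (lam * s ^ α)) ↔
      (α = 1 ∨ lam = 0) := by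
  constructor
  · intro H
    by_cases hone : α = 1
    · exact Or.inl hone
    right
    have hαlt : α < 1 := lt_of_le_of_ne hα1 hone
    set L := lam / Real.Gamma (α + 1) with hL
    have hΓ1 : (0:ℝ) < Real.Gamma (α + 1) := Real.Gamma_pos_of_pos (by linarith)
    -- functional identity in u
    have hid : ∀ u : ℝ, 0 < u →
        mittagLeffler α (lam * ((2:ℝ)^(α:ℝ) * u)) = (mittagLeffler α (lam * u)) ^ 2 := by
      intro u hu
      have ht : (0:ℝ) ≤ u ^ (1/α) := Real.rpow_nonneg hu.le _
      have h := H (u ^ (1/α)) (u ^ (1/α)) ht ht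
      have htα : ((u ^ (1/α)) : ℝ) ^ α = u := by
        rw [← Real.rpow_mul hu.le, one_div, inv_mul_cancel₀ (ne_of_gt hα), Real.rpow_one]
      have h2 : ((u ^ (1/α) + u ^ (1/α)) : ℝ) ^ α = (2:ℝ)^(α:ℝ) * u := by
        rw [← two_mul, Real.mul_rpow (by norm_num) ht, htα]
      rw [h2, htα] at h
      rw [h]; ring
    have h2pos : (0:ℝ) < (2:ℝ)^(α:ℝ) := Real.rpow_pos_of_pos (by norm_num) _
    have base := ml_tendsto hα lam
    have hmap : Tendsto (fun u : ℝ => (2:ℝ)^(α:ℝ) * u) (𝓝[>] (0:ℝ)) (𝓝[>] (0:ℝ)) := by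
      rw [tendsto_nhdsWithin_iff]
      constructor
      · have h1 : Tendsto (fun u : ℝ => (2:ℝ)^(α:ℝ) * u) (𝓝 0) (𝓝 ((2:ℝ)^(α:ℝ) * 0)) :=
          (continuous_const.mul continuous_id).tendsto 0
        rw [mul_zero] at h1
        exact h1.mono_left nhdsWithin_le_nhds
      · filter_upwards [self_mem_nhdsWithin] with u hu
        exact mul_pos h2pos hu
    -- limit 1
    have lim1 : Tendsto (fun u : ℝ => (mittagLeffler α (lam * ((2:ℝ)^(α:ℝ) * u)) - 1) / u)
        (𝓝[>] (0:ℝ)) (𝓝 ((2:ℝ)^(α:ℝ) * L)) := by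
      have hcomp := base.comp hmap
      have h2 := hcomp.const_mul ((2:ℝ)^(α:ℝ))
      rw [mul_comm] at h2
      apply Tendsto.congr' ?_ (by rw [mul_comm]; exact h2)
      filter_upwards [self_mem_nhdsWithin] with u hu
      have hu0 : u ≠ 0 := ne_of_gt hu
      simp only [Function.comp]
      field_simp
    -- limit 2
    have hml1 : Tendsto (fun u : ℝ => mittagLeffler α (lam * u)) (𝓝[>] (0:ℝ)) (𝓝 1) := by
      have hup : Tendsto (fun u : ℝ => (mittagLeffler α (lam*u) - 1)/u * u + 1)
          (𝓝[>] (0:ℝ)) (𝓝 (L * 0 + 1)) := by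
        exact (base.mul (tendsto_id.mono_left nhdsWithin_le_nhds)).add tendsto_const_nhds
      rw [mul_zero, zero_add] at hup
      apply Tendsto.congr' ?_ hup
      filter_upwards [self_mem_nhdsWithin] with u hu
      have hu0 : u ≠ 0 := ne_of_gt (Set.mem_Ioi.mp hu)
      field_simp
      ring
    have lim2 : Tendsto (fun u : ℝ => (mittagLeffler α (lam * ((2:ℝ)^(α:ℝ) * u)) - 1) / u)
        (𝓝[>] (0:ℝ)) (𝓝 (L * 2)) := by
      have hprod := base.mul (hml1.add (tendsto_const_nhds (x := (1:ℝ))))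
      rw [show (1:ℝ) + 1 = 2 by norm_num] at hprod
      apply Tendsto.congr' ?_ hprod
      filter_upwards [self_mem_nhdsWithin] with u hu
      have hu0 : u ≠ 0 := ne_of_gt hu
      rw [hid u hu]
      field_simp
      ring
    have heq : (2:ℝ)^(α:ℝ) * L = L * 2 := tendsto_nhds_unique lim1 lim2
    have h2lt : (2:ℝ)^(α:ℝ) < 2 := by
      calc (2:ℝ)^(α:ℝ) < (2:ℝ)^(1:ℝ) := Real.rpow_lt_rpow_of_exponent_lt one_lt_two hαlt
        _ = 2 := Real.rpow_one 2
    have hL0 : L = 0 := by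
      rcases mul_eq_zero.mp (show ((2:ℝ)^(α:ℝ) - 2) * L = 0 by linarith) with h | h
      · linarith
      · exact h
    rw [hL, div_eq_zero_iff] at hL0
    rcases hL0 with h | h
    · exact h
    · exact absurd h (ne_of_gt hΓ1)
  · rintro (rfl | rfl)
    · intro t s ht hs
      rw [Real.rpow_one, Real.rpow_one, Real.rpow_one, ml_one, ml_one, ml_one,
        mul_add, Real.exp_add]
    · intro t s ht hs
      simp [ml_zero]
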